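/- arXiv:2407.21775 — 7 statements merged into one kernel-verified Lean document; each statement's English description precedes it below -/
import Mathlib

section
/- Let H be a Hermitian N×N complex matrix and O_1,…,O_M be N×N complex matrices satisfying the invariance property [H,O_m] = -∑_{m'=1}^M h_{mm'} O_{m'} for all m ∈ {1,…,M}. Let ρ be any N×N complex matrix and define ρ(t) := exp(-itH) ρ exp(itH) and v_m(t) := trace(ρ(t) O_m). Then for every t ∈ ℝ and every m, the function t ↦ v_m(t) is differentiable at t with derivative v_m'(t) = -i ∑_{m'=1}^M h_{mm'} v_{m'}(t). (Theorem 2.3: the vector of expectations satisfies the shadow Schrödinger equation d/dt v(t) = -i H_S v(t).) -/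
open Matrix NormedSpace

lemma shadow_aux {N : ℕ} (H ρ Om : Matrix (Fin N) (Fin N) ℂ) (t : ℝ) :
    HasDerivAt
      (fun s : ℝ =>
        ((exp ((-(Complex.I * s)) • H) * ρ * exp ((Complex.I * s) • H)) * Om).trace)
      (Complex.I *
        ((exp ((-(Complex.I * t)) • H) * ρ * exp ((Complex.I * t) • H)) *
          (H * Om - Om * H)).trace) t := by
  letI : SeminormedRing (Matrix (Fin N) (Fin N) ℂ) := Matrix.linftyOpSemiNormedRing
  letI : NormedRing (Matrix (Fin N) (Fin N) ℂ) := Matrix.linftyOpNormedRing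
  letI : NormedAlgebra ℂ (Matrix (Fin N) (Fin N) ℂ) := Matrix.linftyOpNormedAlgebra
  set A : Matrix (Fin N) (Fin N) ℂ := (-Complex.I) • H with hA
  set B : Matrix (Fin N) (Fin N) ℂ := Complex.I • H with hB
  have hsA : ∀ s : ℝ, s • A = (-(Complex.I * s)) • H := by
    intro s
    rw [hA, ← smul_assoc]
    congr 1
    rw [Complex.real_smul]
    ring
  have hsB : ∀ s : ℝ, s • B = ((Complex.I * s)) • H := by
    intro s
    rw [hB, ← smul_assoc]
    congr 1
    rw [Complex.real_smul]
    ring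
  have hU : HasDerivAt (fun s : ℝ => exp (s • A)) (exp (t • A) * A) t := by
    have h1 := hasDerivAt_exp_smul_const (𝕂 := ℝ) A t
    exact h1
  have hW : HasDerivAt (fun s : ℝ => exp (s • B)) (exp (t • B) * B) t := by
    have h1 := hasDerivAt_exp_smul_const (𝕂 := ℝ) B t
    exact h1
  have hf := (hU.mul_const ρ).mul hW
  set U : Matrix (Fin N) (Fin N) ℂ := exp (t • A) with hUdef
  set W : Matrix (Fin N) (Fin N) ℂ := exp (t • B) with hWdef
  -- compose with the continuous linear map `X ↦ (X * Om).trace`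
  let L : Matrix (Fin N) (Fin N) ℂ →ₗ[ℝ] ℂ :=
    ((Matrix.traceLinearMap (Fin N) ℂ ℂ).comp (LinearMap.mulRight ℂ Om)).restrictScalars ℝ
  have hL := (LinearMap.toContinuousLinearMap L).hasFDerivAt.comp_hasDerivAt t hf
  have hLapp : ∀ X : Matrix (Fin N) (Fin N) ℂ,
      (LinearMap.toContinuousLinearMap L) X = (X * Om).trace := fun X => rfl
  -- `H` commutes with `U`
  have hc : Commute H U := (((Commute.refl H).smul_right (-Complex.I)).smul_right t).exp_right
  -- identify the function
  have hfun : (fun s : ℝ =>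
      ((exp ((-(Complex.I * s)) • H) * ρ * exp ((Complex.I * s) • H)) * Om).trace)
      = fun s : ℝ => (LinearMap.toContinuousLinearMap L)
          ((exp (s • A) * ρ) * exp (s • B)) := by
    funext s
    rw [hsA s, hsB s]
    rfl
  rw [hfun, ← hsA t, ← hsB t, ← hUdef, ← hWdef]
  refine hL.congr_deriv ?_
  show ((U * A * ρ * W + U * ρ * (W * B)) * Om).trace = _
  -- now a pure trace computation
  have key : (U * (H * (ρ * (W * Om)))).trace = (U * (ρ * (W * (Om * H)))).trace := by
    calc (U * (H * (ρ * (W * Om)))).trace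
        = ((U * H) * (ρ * (W * Om))).trace := by rw [mul_assoc]
      _ = ((H * U) * (ρ * (W * Om))).trace := by rw [hc.eq]
      _ = (H * (U * (ρ * (W * Om)))).trace := by rw [mul_assoc]
      _ = ((U * (ρ * (W * Om))) * H).trace := Matrix.trace_mul_comm _ _
      _ = (U * (ρ * (W * (Om * H)))).trace := by simp only [mul_assoc]
  simp only [hA, hB, Matrix.mul_sub, Matrix.sub_mul, Matrix.trace_sub, add_mul,
    Matrix.trace_add, mul_smul_comm, smul_mul_assoc, Matrix.trace_smul, smul_eq_mul,
    neg_smul, Matrix.mul_neg, Matrix.neg_mul, Matrix.mul_smul, Matrix.smul_mul,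
    Matrix.trace_neg, neg_mul, mul_assoc] at key ⊢
  rw [key]
  ring

/-- **Theorem 2.3 (shadow Schrödinger equation).** If a Hermitian Hamiltonian `H` and
operators `O_1, …, O_M` satisfy the invariance property
`[H, O m] = -∑ m', h m m' • O m'`, then the expectations
`v m t = trace(ρ(t) * O m)` with `ρ(t) = exp(-itH) ρ exp(itH)` satisfy
`d/dt v m t = -i ∑ m', h m m' * v m' t`. -/
theorem shadow_schrodinger_equation
    {N M : ℕ} (hN : 0 < N) (hM : 0 < M)
    (H : Matrix (Fin N) (Fin N) ℂ) (hH : H.IsHermitian)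
    (O : Fin M → Matrix (Fin N) (Fin N) ℂ)
    (h : Fin M → Fin M → ℂ)
    (hinv : ∀ m, H * O m - O m * H = -∑ m', h m m' • O m')
    (ρ : Matrix (Fin N) (Fin N) ℂ)
    (ρt : ℝ → Matrix (Fin N) (Fin N) ℂ)
    (hρt : ∀ t : ℝ, ρt t =
      exp ((-(Complex.I * t)) • H) * ρ * exp ((Complex.I * t) • H))
    (v : Fin M → ℝ → ℂ)
    (hv : ∀ m t, v m t = (ρt t * O m).trace) :
    ∀ (t : ℝ) (m : Fin M),
      HasDerivAt (fun s : ℝ => v m s)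
        (-Complex.I * ∑ m', h m m' * v m' t) t := by
  intro t m
  have key := shadow_aux H ρ (O m) t
  have hfun : (fun s : ℝ => v m s) = fun s : ℝ =>
      ((exp ((-(Complex.I * s)) • H) * ρ * exp ((Complex.I * s) • H)) * O m).trace := by
    funext s
    rw [hv, hρt]
  rw [hfun]
  convert key using 1
  rw [hinv m]
  simp only [Matrix.mul_neg, Matrix.trace_neg, Matrix.mul_sum, Matrix.trace_sum,
    Matrix.mul_smul, Matrix.trace_smul, smul_eq_mul, hv, hρt, mul_neg, neg_mul, neg_neg,
    Finset.mul_sum, Finset.sum_neg_distrib]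
end

section
/- Let H be a Hermitian N×N complex matrix and O_1,…,O_M be N×N complex matrices satisfying the invariance property [H,O_m] = -∑_{m'=1}^M h_{mm'} O_{m'} for all m, with H_S the M×M matrix of coefficients h_{mm'}. Let ρ be any N×N complex matrix, ρ(t) := exp(-itH) ρ exp(itH), and v_m(t) := trace(ρ(t) O_m). Then for all t ∈ ℝ, the expectation vector is given by the matrix exponential of the shadow Hamiltonian: v_m(t) = ∑_{m'=1}^M (exp(-it H_S))_{mm'} v_{m'}(0) for every m. -/
open Matrix NormedSpace

/-- The expectation vector evolves by the matrix exponential of the shadow Hamiltonian: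
`v m t = ∑ m', (exp (-it H_S)) m m' * v m' 0`. -/
theorem shadow_state_matrix_exponential
    {N M : ℕ} (hN : 0 < N) (hM : 0 < M)
    (H : Matrix (Fin N) (Fin N) ℂ) (hH : H.IsHermitian)
    (O : Fin M → Matrix (Fin N) (Fin N) ℂ)
    (h : Fin M → Fin M → ℂ)
    (hinv : ∀ m, H * O m - O m * H = -∑ m', h m m' • O m')
    (HS : Matrix (Fin M) (Fin M) ℂ) (hHS : ∀ m m', HS m m' = h m m')
    (ρ : Matrix (Fin N) (Fin N) ℂ)
    (ρt : ℝ → Matrix (Fin N) (Fin N) ℂ)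
    (hρt : ∀ t : ℝ, ρt t =
      exp ((-(Complex.I * t)) • H) * ρ * exp ((Complex.I * t) • H))
    (v : Fin M → ℝ → ℂ)
    (hv : ∀ m t, v m t = (ρt t * O m).trace) :
    ∀ (t : ℝ) (m : Fin M),
      v m t = ∑ m', (exp ((-(Complex.I * t)) • HS)) m m' * v m' 0 := by
  letI : NormedRing (Matrix (Fin N) (Fin N) ℂ) := Matrix.linftyOpNormedRing
  letI : NormedAlgebra ℂ (Matrix (Fin N) (Fin N) ℂ) := Matrix.linftyOpNormedAlgebra
  letI : NormedRing (Matrix (Fin M) (Fin M) ℂ) := Matrix.linftyOpNormedRing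
  letI : NormedAlgebra ℂ (Matrix (Fin M) (Fin M) ℂ) := Matrix.linftyOpNormedAlgebra
  intro t m
  set B : Matrix (Fin N) (Fin N) ℂ := (-Complex.I) • H with hB
  set C : Matrix (Fin N) (Fin N) ℂ := Complex.I • H with hC
  set K : Matrix (Fin M) (Fin M) ℂ := Complex.I • HS with hK
  have hsB : ∀ s : ℝ, ((s : ℝ) : ℂ) • B = (-(Complex.I * s)) • H := by
    intro s; rw [hB, smul_smul]; congr 1; ring
  have hsC : ∀ s : ℝ, ((s : ℝ) : ℂ) • C = (Complex.I * s) • H := by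
    intro s; rw [hC, smul_smul]; congr 1; ring
  have hsK : ∀ s : ℝ, ((s : ℝ) : ℂ) • K = (Complex.I * s) • HS := by
    intro s; rw [hK, smul_smul]; congr 1; ring
  -- derivatives of the two unitary factors
  have hE : ∀ s : ℝ, HasDerivAt (fun u : ℝ => exp ((-(Complex.I * u)) • H))
      (B * exp ((-(Complex.I * s)) • H)) s := by
    intro s
    have h1 : HasDerivAt (fun u : ℝ => exp ((u : ℂ) • B))
        (B * exp (((s : ℝ) : ℂ) • B)) s := by
      have h2 := (hasDerivAt_exp_smul_const' B ((s : ℝ) : ℂ)).scomp s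
        Complex.ofRealCLM.hasDerivAt
      simp [Function.comp_def] at h2
      exact h2
    simp only [hsB] at h1
    exact h1
  have hF : ∀ s : ℝ, HasDerivAt (fun u : ℝ => exp ((Complex.I * u) • H))
      (exp ((Complex.I * s) • H) * C) s := by
    intro s
    have h1 : HasDerivAt (fun u : ℝ => exp ((u : ℂ) • C))
        (exp (((s : ℝ) : ℂ) • C) * C) s := by
      have h2 := (hasDerivAt_exp_smul_const C ((s : ℝ) : ℂ)).scomp s
        Complex.ofRealCLM.hasDerivAt
      simp [Function.comp_def] at h2
      exact h2
    simp only [hsC] at h1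
    exact h1
  -- derivative of the evolved state
  have hρ' : ∀ s : ℝ, HasDerivAt ρt (B * ρt s + ρt s * C) s := by
    intro s
    have h1 := ((hE s).mul_const ρ).mul (hF s)
    have heq : ρt = fun u : ℝ =>
        exp ((-(Complex.I * u)) • H) * ρ * exp ((Complex.I * u) • H) := funext hρt
    rw [heq]
    refine HasDerivAt.congr_deriv h1 ?_
    simp only [mul_assoc, mul_add]
  -- the trace functionals are continuous linear maps
  let L : Fin M → (Matrix (Fin N) (Fin N) ℂ →ₗ[ℂ] ℂ) := fun k =>
    { toFun := fun X => (X * O k).trace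
      map_add' := fun X Y => by simp [add_mul]
      map_smul' := fun c X => by simp [smul_mul_assoc] }
  let Lc : Fin M → (Matrix (Fin N) (Fin N) ℂ →L[ℂ] ℂ) := fun k =>
    (L k).toContinuousLinearMap
  -- invariance in the convenient form
  have hcomm : ∀ k, O k * B + C * O k = ∑ j, (-Complex.I * h k j) • O j := by
    intro k
    have h2 : O k * B + C * O k = Complex.I • (H * O k - O k * H) := by
      rw [hB, hC, mul_smul_comm, smul_mul_assoc]
      module
    rw [h2, hinv k, smul_neg, Finset.smul_sum, ← Finset.sum_neg_distrib]
    refine Finset.sum_congr rfl fun j _ => ?_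
    rw [smul_smul, ← neg_smul, neg_mul]
  -- the trace identity
  have htr : ∀ k (P : Matrix (Fin N) (Fin N) ℂ),
      ((B * P + P * C) * O k).trace = ∑ j, (-Complex.I * h k j) * (P * O j).trace := by
    intro k P
    have h3 : ((B * P + P * C) * O k).trace = (P * (O k * B + C * O k)).trace := by
      rw [add_mul, Matrix.trace_add, mul_assoc, Matrix.trace_mul_comm B (P * O k),
        mul_assoc, mul_assoc, ← Matrix.trace_add, ← mul_add]
    rw [h3, hcomm k, Matrix.mul_sum, Matrix.trace_sum]
    refine Finset.sum_congr rfl fun j _ => ?_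
    rw [Matrix.mul_smul, Matrix.trace_smul, smul_eq_mul]
  -- derivative of the expectation values
  have hv' : ∀ k (s : ℝ), HasDerivAt (v k) (∑ j, (-Complex.I * h k j) * v j s) s := by
    intro k s
    have hveq : v k = fun u : ℝ => ((Lc k).restrictScalars ℝ) (ρt u) :=
      funext fun u => by rw [hv]; rfl
    have hd := ((Lc k).restrictScalars ℝ).hasFDerivAt.comp_hasDerivAt s (hρ' s)
    rw [hveq]
    refine HasDerivAt.congr_deriv hd ?_
    have : ((Lc k).restrictScalars ℝ) (B * ρt s + ρt s * C)
        = ((B * ρt s + ρt s * C) * O k).trace := rfl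
    refine this.trans ?_
    rw [htr k (ρt s)]
    refine Finset.sum_congr rfl fun j _ => ?_
    rw [hv j s]
  -- derivative of the auxiliary exponential
  set Gm : ℝ → Matrix (Fin M) (Fin M) ℂ := fun u => exp ((Complex.I * u) • HS) with hGm
  have hG : ∀ s : ℝ, HasDerivAt Gm (Gm s * K) s := by
    intro s
    have h1 : HasDerivAt (fun u : ℝ => exp ((u : ℂ) • K))
        (exp (((s : ℝ) : ℂ) • K) * K) s := by
      have h2 := (hasDerivAt_exp_smul_const K ((s : ℝ) : ℂ)).scomp s
        Complex.ofRealCLM.hasDerivAt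
      simp [Function.comp_def] at h2
      exact h2
    simp only [hsK] at h1
    exact h1
  -- entry maps are continuous linear
  let Ent : Fin M → Fin M → (Matrix (Fin M) (Fin M) ℂ →ₗ[ℂ] ℂ) := fun a b =>
    { toFun := fun X => X a b
      map_add' := fun X Y => rfl
      map_smul' := fun c X => rfl }
  have hGe : ∀ (a b : Fin M) (s : ℝ), HasDerivAt (fun u => Gm u a b) ((Gm s * K) a b) s := by
    intro a b s
    exact ((Ent a b).toContinuousLinearMap.restrictScalars ℝ).hasFDerivAt.comp_hasDerivAt
      s (hG s)
  -- the conjugated expectations are constant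
  have hφ : ∀ (k : Fin M) (s : ℝ), HasDerivAt (fun u => ∑ j, Gm u k j * v j u) 0 s := by
    intro k s
    have hsum : HasDerivAt (fun u => ∑ j, Gm u k j * v j u)
        (∑ j, ((Gm s * K) k j * v j s + Gm s k j * (∑ i, (-Complex.I * h j i) * v i s))) s :=
      HasDerivAt.fun_sum fun j _ => (hGe k j s).mul (hv' j s)
    convert hsum using 1
    rw [Finset.sum_add_distrib]
    have e1 : ∑ j, (Gm s * K) k j * v j s
        = ∑ j, ∑ i, Gm s k i * (Complex.I * h i j) * v j s := by
      refine Finset.sum_congr rfl fun j _ => ?_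
      rw [Matrix.mul_apply, Finset.sum_mul]
      refine Finset.sum_congr rfl fun i _ => ?_
      rw [hK, Matrix.smul_apply, hHS, smul_eq_mul]
    have e2 : ∑ j, Gm s k j * (∑ i, (-Complex.I * h j i) * v i s)
        = ∑ j, ∑ i, -(Gm s k i * (Complex.I * h i j) * v j s) := by
      simp_rw [Finset.mul_sum]
      rw [Finset.sum_comm]
      exact Finset.sum_congr rfl fun j _ => Finset.sum_congr rfl fun i _ => by ring
    rw [e1, e2, ← Finset.sum_add_distrib]
    refine (Finset.sum_eq_zero fun j _ => ?_).symm
    rw [← Finset.sum_add_distrib]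
    exact Finset.sum_eq_zero fun i _ => by ring
  -- constancy
  have hconst : ∀ k : Fin M, ∑ j, Gm t k j * v j t = v k 0 := by
    intro k
    have h0 : (fun u => ∑ j, Gm u k j * v j u) t = (fun u => ∑ j, Gm u k j * v j u) 0 :=
      is_const_of_deriv_eq_zero (fun s => (hφ k s).differentiableAt)
        (fun s => (hφ k s).deriv) t 0
    have hG0 : Gm 0 = 1 := by
      rw [hGm]
      simp
    simpa [hG0, Matrix.one_apply] using h0
  -- the inverse relation
  have hunit : exp ((-(Complex.I * t)) • HS) * Gm t = 1 := by
    rw [hGm]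
    have hneg : (-(Complex.I * (t : ℝ))) • HS = -((Complex.I * (t : ℝ)) • HS) := by
      rw [neg_smul]
    rw [hneg, ← Matrix.exp_add_of_commute _ _ ((Commute.refl ((Complex.I * (t : ℝ)) • HS)).neg_left),
      neg_add_cancel, exp_zero]
  -- final computation
  have final : ∑ m', exp ((-(Complex.I * t)) • HS) m m' * v m' 0 = v m t := by
    calc ∑ m', exp ((-(Complex.I * t)) • HS) m m' * v m' 0
        = ∑ m', exp ((-(Complex.I * t)) • HS) m m' * ∑ j, Gm t m' j * v j t := by
          exact Finset.sum_congr rfl fun m' _ => by rw [hconst m']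
      _ = ∑ j, (∑ m', exp ((-(Complex.I * t)) • HS) m m' * Gm t m' j) * v j t := by
          simp_rw [Finset.mul_sum, Finset.sum_mul]
          rw [Finset.sum_comm]
          exact Finset.sum_congr rfl fun j _ => Finset.sum_congr rfl fun i _ => by ring
      _ = ∑ j, ((exp ((-(Complex.I * t)) • HS) * Gm t) m j) * v j t := by
          exact Finset.sum_congr rfl fun j _ => by rw [Matrix.mul_apply]
      _ = v m t := by
          rw [hunit]
          simp [Matrix.one_apply]
  exact final.symm
end

section
/- Let H be a Hermitian N×N complex matrix and O_1,…,O_M be N×N complex matrices satisfying the invariance property [H,O_m] = -∑_{m'=1}^M h_{mm'} O_{m'} for all m. If the operators O_m are orthogonal, i.e. trace(O_mᴴ O_{m'}) = λ δ_{mm'} for some real λ > 0 and all m, m', then the M×M matrix H_S with entries h_{mm'} is Hermitian: h_{mm'} = conj(h_{m'm}) for all m, m'. (Lemma 2.4.) -/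
open Matrix

/-- **Lemma 2.4.** If the operators `O m` are orthogonal with respect to the trace inner
product, then the shadow Hamiltonian matrix `H_S` (with entries `h m m'`) is Hermitian. -/
theorem shadow_hamiltonian_hermitian_of_orthogonal
    {N M : ℕ} (hN : 0 < N) (hM : 0 < M)
    (H : Matrix (Fin N) (Fin N) ℂ) (hH : H.IsHermitian)
    (O : Fin M → Matrix (Fin N) (Fin N) ℂ)
    (h : Fin M → Fin M → ℂ)
    (hinv : ∀ m, H * O m - O m * H = -∑ m', h m m' • O m')
    (lam : ℝ) (hlam : 0 < lam)
    (horth : ∀ m m', ((O m)ᴴ * O m').trace = if m = m' then (lam : ℂ) else 0) :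
    ∀ m m', h m m' = starRingEnd ℂ (h m' m) := by
  have key : ∀ a b, ((O b)ᴴ * (H * O a)).trace - ((O b)ᴴ * (O a * H)).trace
      = -(h a b * lam) := by
    intro a b
    have h1 : (O b)ᴴ * (H * O a - O a * H) = (O b)ᴴ * (-∑ m', h a m' • O m') := by
      rw [hinv a]
    have h2 := congrArg Matrix.trace h1
    rw [Matrix.mul_sub, Matrix.trace_sub] at h2
    rw [h2, Matrix.mul_neg, Matrix.trace_neg, Matrix.mul_sum, Matrix.trace_sum]
    congr 1
    rw [Finset.sum_eq_single b]
    · rw [Matrix.mul_smul, Matrix.trace_smul, horth, if_pos rfl, smul_eq_mul]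
    · intro c _ hc
      rw [Matrix.mul_smul, Matrix.trace_smul, horth, if_neg hc.symm, smul_zero]
    · intro hb; exact absurd (Finset.mem_univ b) hb
  intro m m'
  have k1 := key m m'
  have k2 := key m' m
  have k2' := congrArg (star : ℂ → ℂ) k2
  have e1 : star (((O m)ᴴ * (H * O m')).trace) = ((O m')ᴴ * (H * O m)).trace := by
    rw [← Matrix.trace_conjTranspose, Matrix.conjTranspose_mul, Matrix.conjTranspose_mul,
      Matrix.conjTranspose_conjTranspose, hH.eq, Matrix.mul_assoc]
  have e2 : star (((O m)ᴴ * (O m' * H)).trace) = ((O m')ᴴ * (O m * H)).trace := by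
    rw [← Matrix.trace_conjTranspose, Matrix.conjTranspose_mul, Matrix.conjTranspose_mul,
      Matrix.conjTranspose_conjTranspose, hH.eq]
    rw [Matrix.trace_mul_cycle]
    conv_rhs => rw [Matrix.trace_mul_comm, Matrix.mul_assoc]
    rw [Matrix.mul_assoc]
  rw [star_sub, e1, e2, k1, star_neg, star_mul', Complex.star_def, Complex.conj_ofReal] at k2'
  have hlam' : (lam : ℂ) ≠ 0 := by
    exact_mod_cast (ne_of_gt hlam)
  have := neg_injective k2'
  field_simp at this
  exact this
end

section
/- Let H be a Hermitian N×N complex matrix and O_1,…,O_M be N×N complex matrices satisfying the invariance property [H,O_m] = -∑_{m'=1}^M h_{mm'} O_{m'} for all m, and assume the M×M matrix H_S with entries h_{mm'} is Hermitian. Let ρ be any N×N complex matrix, ρ(t) := exp(-itH) ρ exp(itH), and v_m(t) := trace(ρ(t) O_m). Then the squared norm of the expectation vector is conserved: ∑_{m=1}^M |v_m(t)|² = ∑_{m=1}^M |v_m(0)|² for all t ∈ ℝ. (Hence the normalization constant A of the shadow state is constant in time.) -/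
open Matrix NormedSpace

section aux

variable {N M : ℕ}

attribute [local instance] Matrix.linftyOpNormedRing Matrix.linftyOpNormedAlgebra

/-- The linear map sending an `M×M` matrix `A` to `∑ m', A m m' • O m'`. -/
noncomputable def shadowPsi (O : Fin M → Matrix (Fin N) (Fin N) ℂ) (m : Fin M) :
    Matrix (Fin M) (Fin M) ℂ →ₗ[ℂ] Matrix (Fin N) (Fin N) ℂ where
  toFun A := ∑ m', A m m' • O m'
  map_add' A B := by simp [Matrix.add_apply, add_smul, Finset.sum_add_distrib]
  map_smul' c A := by simp [Matrix.smul_apply, Finset.smul_sum, smul_smul]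

lemma shadowPsi_comm
    (H : Matrix (Fin N) (Fin N) ℂ) (O : Fin M → Matrix (Fin N) (Fin N) ℂ)
    (h : Fin M → Fin M → ℂ)
    (hinv : ∀ m, H * O m - O m * H = -∑ m', h m m' • O m')
    (HS : Matrix (Fin M) (Fin M) ℂ) (hHS : ∀ m m', HS m m' = h m m')
    (m : Fin M) (X : Matrix (Fin M) (Fin M) ℂ) :
    H * shadowPsi O m X - shadowPsi O m X * H = -(shadowPsi O m (X * HS)) := by
  simp only [shadowPsi, LinearMap.coe_mk, AddHom.coe_mk]
  calc H * (∑ m', X m m' • O m') - (∑ m', X m m' • O m') * H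
      = ∑ m', X m m' • (H * O m' - O m' * H) := by
        rw [Finset.mul_sum, Finset.sum_mul, ← Finset.sum_sub_distrib]
        simp [mul_smul_comm, smul_mul_assoc, smul_sub]
    _ = ∑ m', X m m' • (-∑ k, h m' k • O k) := by simp_rw [hinv]
    _ = -∑ m', ∑ k, (X m m' * h m' k) • O k := by
        simp [smul_smul, Finset.smul_sum]
    _ = -∑ k, ∑ m', (X m m' * h m' k) • O k := by rw [Finset.sum_comm]
    _ = -∑ k, ((X * HS) m k) • O k := by
        congr 1
        refine Finset.sum_congr rfl fun k _ => ?_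
        rw [← Finset.sum_smul]
        congr 1
        simp [Matrix.mul_apply, hHS]

lemma shadowPsi_one (O : Fin M → Matrix (Fin N) (Fin N) ℂ) (m : Fin M) :
    shadowPsi O m 1 = O m := by
  simp [shadowPsi, Matrix.one_apply, ite_smul, Finset.sum_ite_eq]

lemma exp_mul_exp_neg (n : ℕ) (c : ℂ) (A : Matrix (Fin n) (Fin n) ℂ) :
    exp (c • A) * exp ((-c) • A) = 1 := by
  rw [← Matrix.exp_add_of_commute]
  · rw [← add_smul]
    simp
  · exact ((Commute.refl A).smul_left c).smul_right (-c)

/-- Main conjugation identity. -/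
lemma shadow_conj_exp
    (H : Matrix (Fin N) (Fin N) ℂ) (O : Fin M → Matrix (Fin N) (Fin N) ℂ)
    (h : Fin M → Fin M → ℂ)
    (hinv : ∀ m, H * O m - O m * H = -∑ m', h m m' • O m')
    (HS : Matrix (Fin M) (Fin M) ℂ) (hHS : ∀ m m', HS m m' = h m m')
    (m : Fin M) (t : ℝ) :
    exp ((-(Complex.I * t)) • H) *
      (∑ m', (exp ((-(Complex.I * t)) • HS)) m m' • O m') *
      exp ((Complex.I * t) • H) = O m := by
  set xH : Matrix (Fin N) (Fin N) ℂ := (-Complex.I) • H with hxH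
  set yH : Matrix (Fin N) (Fin N) ℂ := Complex.I • H with hyH
  set xS : Matrix (Fin M) (Fin M) ℂ := (-Complex.I) • HS with hxS
  let ψ : Matrix (Fin M) (Fin M) ℂ →L[ℂ] Matrix (Fin N) (Fin N) ℂ :=
    (shadowPsi O m).toContinuousLinearMap
  let f : ℝ → Matrix (Fin N) (Fin N) ℂ :=
    fun s => exp (s • xH) * ψ (exp (s • xS)) * exp (s • yH)
  have hψc : ∀ X, ψ X = shadowPsi O m X := fun X => rfl
  have hf : ∀ s : ℝ, HasDerivAt f 0 s := by
    intro s
    have hA := hasDerivAt_exp_smul_const (𝕂 := ℝ) xH s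
    have hB := hasDerivAt_exp_smul_const (𝕂 := ℝ) yH s
    have hXS := hasDerivAt_exp_smul_const (𝕂 := ℝ) xS s
    have hE : HasDerivAt (fun u : ℝ => ψ (exp (u • xS))) (ψ (exp (s • xS) * xS)) s :=
      (ψ.restrictScalars ℝ).hasFDerivAt.comp_hasDerivAt s hXS
    have hmain := (hA.mul hE).mul hB
    convert hmain using 1
    case e'_4 => rfl
    case e'_5 => rfl
    case e'_6 => rfl
    case e'_8 => rfl
    set A := exp (s • xH)
    set B := exp (s • yH)
    set X := exp (s • xS)
    have cB : B * yH = yH * B :=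
      (((Commute.refl yH).smul_left s).exp_left).eq
    have hc := shadowPsi_comm H O h hinv HS hHS m X
    have hc2' := congrArg Neg.neg hc
    rw [neg_neg, neg_sub] at hc2'
    have hc2 : shadowPsi O m (X * HS) = shadowPsi O m X * H - H * shadowPsi O m X := hc2'.symm
    have key : xH * ψ X + ψ (X * xS) + ψ X * yH = 0 := by
      have hXxS : X * xS = (-Complex.I) • (X * HS) := by
        rw [hxS, mul_smul_comm]
      rw [hXxS, ψ.map_smul, hψc, hψc, hc2, hxH, hyH]
      rw [smul_mul_assoc, mul_smul_comm]
      module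
    have expand : (A * xH * ψ X + A * ψ (X * xS)) * B + A * ψ X * (B * yH)
        = A * (xH * ψ X + ψ (X * xS) + ψ X * yH) * B := by
      rw [cB]
      noncomm_ring
    show (0 : Matrix (Fin N) (Fin N) ℂ) = (A * xH * ψ X + A * ψ (X * xS)) * B + A * ψ X * (B * yH)
    rw [expand, key, mul_zero, zero_mul]
  have hconst : ∀ s : ℝ, f s = f 0 := fun s =>
    is_const_of_deriv_eq_zero (fun u => (hf u).differentiableAt)
      (fun u => (hf u).deriv) s 0
  have hf0 : f 0 = O m := by
    simp only [f, zero_smul, exp_zero, one_mul, mul_one]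
    exact shadowPsi_one O m
  have hsm : ∀ (n : ℕ) (A : Matrix (Fin n) (Fin n) ℂ) (c : ℂ),
      (c * (t : ℂ)) • A = t • (c • A) := by
    intro n A c
    rw [← smul_assoc]
    congr 1
    simp [Complex.real_smul, mul_comm]
  have e1 : (-(Complex.I * (t : ℂ))) • H = t • xH := by
    rw [hxH, ← hsm]; ring_nf
  have e2 : ((Complex.I * (t : ℂ))) • H = t • yH := by rw [hyH, ← hsm]
  have e3 : (-(Complex.I * (t : ℂ))) • HS = t • xS := by
    rw [hxS, ← hsm]; ring_nf
  have hexpN : (exp : Matrix (Fin N) (Fin N) ℂ → _) = exp :=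
    rfl
  have hexpM : (exp : Matrix (Fin M) (Fin M) ℂ → _) = exp :=
    rfl
  rw [e1, e2, e3, hexpN, hexpM]
  calc exp (t • xH) * (∑ m', (exp (t • xS)) m m' • O m') * exp (t • yH)
      = f t := rfl
    _ = f 0 := hconst t
    _ = O m := hf0

lemma shadow_unitary
    (HS : Matrix (Fin M) (Fin M) ℂ) (hHerm : HS.IsHermitian) (t : ℝ) :
    (exp ((-(Complex.I * t)) • HS))ᴴ * exp ((-(Complex.I * t)) • HS) = 1 := by
  have h1 : (exp ((-(Complex.I * t)) • HS))ᴴ = exp ((Complex.I * t) • HS) := by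
    rw [← Matrix.exp_conjTranspose]
    congr 1
    rw [Matrix.conjTranspose_smul, hHerm.eq]
    congr 1
    simp [Complex.ext_iff]
  rw [h1]
  have := exp_mul_exp_neg M (Complex.I * t) HS
  simpa using this

end aux

/-- If `H_S` is Hermitian, the squared norm of the expectation vector is conserved:
`∑ m, |v m t|² = ∑ m, |v m 0|²`, so the normalization `A` of the shadow state is
constant in time. -/
theorem shadow_state_norm_conserved
    {N M : ℕ} (hN : 0 < N) (hM : 0 < M)
    (H : Matrix (Fin N) (Fin N) ℂ) (hH : H.IsHermitian)
    (O : Fin M → Matrix (Fin N) (Fin N) ℂ)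
    (h : Fin M → Fin M → ℂ)
    (hinv : ∀ m, H * O m - O m * H = -∑ m', h m m' • O m')
    (HS : Matrix (Fin M) (Fin M) ℂ) (hHS : ∀ m m', HS m m' = h m m')
    (hHerm : HS.IsHermitian)
    (ρ : Matrix (Fin N) (Fin N) ℂ)
    (ρt : ℝ → Matrix (Fin N) (Fin N) ℂ)
    (hρt : ∀ t : ℝ, ρt t =
      exp ((-(Complex.I * t)) • H) * ρ * exp ((Complex.I * t) • H))
    (v : Fin M → ℝ → ℂ)
    (hv : ∀ m t, v m t = (ρt t * O m).trace) :
    ∀ t : ℝ, ∑ m, ‖v m t‖ ^ 2 = ∑ m, ‖v m 0‖ ^ 2 := by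
  intro t
  set X := exp ((-(Complex.I * (t : ℂ))) • HS) with hX
  set v0 : Fin M → ℂ := fun m => (ρ * O m).trace with hv0def
  have hρ0 : ρt 0 = ρ := by
    rw [hρt]
    norm_num
  have hv0 : ∀ m, v m 0 = v0 m := by
    intro m
    rw [hv, hρ0]
  set w : Fin M → ℂ := X.mulVec v0 with hw
  have hvt : ∀ m, v m t = w m := by
    intro m
    set A := exp ((-(Complex.I * (t : ℂ))) • H) with hA
    set B := exp (((Complex.I * (t : ℂ))) • H) with hB
    have hconj := shadow_conj_exp H O h hinv HS hHS m t
    set E : Matrix (Fin N) (Fin N) ℂ := ∑ m', X m m' • O m' with hE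
    have hBA : B * A = 1 := by
      rw [hA, hB]
      exact exp_mul_exp_neg N (Complex.I * t) H
    have step1 : ρt t * O m = A * (ρ * E) * B := by
      rw [hρt, ← hA, ← hB, ← hconj]
      calc A * ρ * B * (A * E * B) = A * ρ * (B * A) * E * B := by noncomm_ring
        _ = A * (ρ * E) * B := by rw [hBA]; noncomm_ring
    have step2 : (ρt t * O m).trace = (ρ * E).trace := by
      rw [step1, Matrix.trace_mul_cycle, ← Matrix.mul_assoc, hBA, Matrix.one_mul]
    rw [hv, step2, hE, Matrix.mul_sum]
    simp only [Matrix.mul_smul, Matrix.trace_sum, Matrix.trace_smul]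
    simp [hw, Matrix.mulVec, dotProduct, hv0def, smul_eq_mul]
  have hunit := shadow_unitary HS hHerm t
  have key : dotProduct (star w) w = dotProduct (star v0) v0 := by
    rw [hw, Matrix.star_mulVec, dotProduct_mulVec, Matrix.vecMul_vecMul, hX,
      hunit, Matrix.vecMul_one]
  have habs : ∀ u : Fin M → ℂ,
      dotProduct (star u) u = ((∑ m, ‖u m‖ ^ 2 : ℝ) : ℂ) := by
    intro u
    simp only [dotProduct, Pi.star_apply, Complex.sq_norm]
    push_cast
    refine Finset.sum_congr rfl fun m _ => ?_
    rw [Complex.normSq_eq_conj_mul_self]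
    rfl
  have : ((∑ m, ‖w m‖ ^ 2 : ℝ) : ℂ) = ((∑ m, ‖v0 m‖ ^ 2 : ℝ) : ℂ) := by
    rw [← habs, ← habs, key]
  have hre := Complex.ofReal_inj.mp this
  calc ∑ m, ‖v m t‖ ^ 2 = ∑ m, ‖w m‖ ^ 2 := by
        refine Finset.sum_congr rfl fun m _ => ?_; rw [hvt]
    _ = ∑ m, ‖v0 m‖ ^ 2 := hre
    _ = ∑ m, ‖v m 0‖ ^ 2 := by
        refine Finset.sum_congr rfl fun m _ => ?_; rw [hv0]
end

section
/- Let H be a Hermitian N×N complex matrix and O_1,…,O_M be N×N complex matrices satisfying the invariance property [H,O_m] = -∑_{m'=1}^M h_{mm'} O_{m'} for all m. Let ρ be any N×N complex matrix, let O_m(t) := exp(itH) O_m exp(-itH), and define w_{m,m'}(t,t') := trace(ρ · O_m(t) · O_{m'}(t')). Then for every fixed t and every (m,m'), the function t' ↦ w_{m,m'}(t,t') is differentiable with derivative ∂_{t'} w_{m,m'}(t,t') = -i ∑_{k=1}^M h_{m'k} w_{m,k}(t,t'). (Theorem 3.1, second equation: ∂_{t'} |ρ;S(t,t')⟩ = -i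 (1 ⊗ H_S) |ρ;S(t,t')⟩.) -/
open Matrix NormedSpace

section
attribute [local instance] Matrix.linftyOpNormedRing Matrix.linftyOpNormedAlgebra

/-- **Theorem 3.1, second equation.** The two-time correlator
`w m m' t t' = trace(ρ · O_m(t) · O_{m'}(t'))`, with `O_m(t)` the Heisenberg evolution,
satisfies `∂_{t'} w m m' t t' = -i ∑ k, h m' k * w m k t t'`. -/
theorem two_time_correlator_derivative_snd
    {N M : ℕ} (hN : 0 < N) (hM : 0 < M)
    (H : Matrix (Fin N) (Fin N) ℂ) (hH : H.IsHermitian)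
    (O : Fin M → Matrix (Fin N) (Fin N) ℂ)
    (h : Fin M → Fin M → ℂ)
    (hinv : ∀ m, H * O m - O m * H = -∑ m', h m m' • O m')
    (ρ : Matrix (Fin N) (Fin N) ℂ)
    (Ot : Fin M → ℝ → Matrix (Fin N) (Fin N) ℂ)
    (hOt : ∀ m (t : ℝ), Ot m t =
      NormedSpace.exp ((Complex.I * t) • H) * O m * NormedSpace.exp ((-(Complex.I * t)) • H))
    (w : Fin M → Fin M → ℝ → ℝ → ℂ)
    (hw : ∀ m m' t t', w m m' t t' = (ρ * Ot m t * Ot m' t').trace) :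
    ∀ (t t' : ℝ) (m m' : Fin M),
      HasDerivAt (fun s : ℝ => w m m' t s)
        (-Complex.I * ∑ k, h m' k * w m k t t') t' := by
  intro t t' m m'
  set B : Matrix (Fin N) (Fin N) ℂ := Complex.I • H with hB
  have hcoe : ∀ s : ℝ, (Complex.I * (s : ℂ)) • H = s • B := by
    intro s
    rw [hB, ← smul_assoc]
    congr 1
    rw [Complex.real_smul, mul_comm]
  have hcoe2 : ∀ s : ℝ, (-(Complex.I * (s : ℂ))) • H = s • (-B) := by
    intro s
    rw [smul_neg, ← hcoe, ← neg_smul]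
  have key : ∀ (k : Fin M) (s : ℝ),
      Ot k s = NormedSpace.exp (s • B) * O k * NormedSpace.exp (s • (-B)) := by
    intro k s
    rw [hOt, hcoe, hcoe2]
  have hd1 : HasDerivAt (fun s : ℝ => NormedSpace.exp (s • B)) (NormedSpace.exp (t' • B) * B) t' :=
    hasDerivAt_exp_smul_const B t'
  have hd2 : HasDerivAt (fun s : ℝ => NormedSpace.exp (s • (-B))) (NormedSpace.exp (t' • (-B)) * (-B)) t' :=
    hasDerivAt_exp_smul_const (-B) t'
  have hdf : HasDerivAt (fun s : ℝ => Ot m' s)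
      (B * Ot m' t' - Ot m' t' * B) t' := by
    have h0 := (hd1.mul_const (O m')).mul hd2
    have heq : NormedSpace.exp (t' • B) * B * O m' * NormedSpace.exp (t' • (-B)) +
        NormedSpace.exp (t' • B) * O m' * (NormedSpace.exp (t' • (-B)) * (-B))
        = B * Ot m' t' - Ot m' t' * B := by
      rw [key m' t']
      have hcomm : NormedSpace.exp (t' • B) * B = B * NormedSpace.exp (t' • B) :=
        (((Commute.refl B).smul_left t').exp_left).eq
      rw [hcomm]
      noncomm_ring
    rw [heq] at h0
    have hfun2 : (fun s : ℝ => NormedSpace.exp (s • B) * O m' * NormedSpace.exp (s • (-B)))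
        = fun s : ℝ => Ot m' s := by
      funext s; rw [key m' s]
    rw [← hfun2]; exact h0
  set L : Matrix (Fin N) (Fin N) ℂ →ₗ[ℂ] ℂ :=
    (Matrix.traceLinearMap (Fin N) ℂ ℂ).comp (LinearMap.mulLeft ℂ (ρ * Ot m t)) with hL
  have hLapp : ∀ X, L X = (ρ * Ot m t * X).trace := fun X => rfl
  have hdw : HasDerivAt (fun s : ℝ => L (Ot m' s)) (L (B * Ot m' t' - Ot m' t' * B)) t' := by
    have h1 := ((LinearMap.toContinuousLinearMap L).restrictScalars ℝ).hasFDerivAt.comp_hasDerivAt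
      t' hdf
    exact h1
  have hfun : (fun s : ℝ => w m m' t s) = fun s : ℝ => L (Ot m' s) := by
    funext s; rw [hw, hLapp]
  rw [hfun]
  have hc1 : H * NormedSpace.exp (t' • B) = NormedSpace.exp (t' • B) * H := by
    have := (((Commute.refl H).smul_right Complex.I).smul_right t').exp_right
    simpa [hB] using this.eq
  have hc2 : H * NormedSpace.exp (t' • (-B)) = NormedSpace.exp (t' • (-B)) * H := by
    have := ((((Commute.refl H).smul_right Complex.I).neg_right).smul_right t').exp_right
    simpa [hB] using this.eq
  have hHF : H * Ot m' t' - Ot m' t' * H = -∑ k, h m' k • Ot k t' := by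
    have hl : H * Ot m' t' = NormedSpace.exp (t' • B) * (H * O m') * NormedSpace.exp (t' • (-B)) := by
      rw [key m' t']
      simp only [← mul_assoc]
      rw [hc1]
    have hr : Ot m' t' * H = NormedSpace.exp (t' • B) * (O m' * H) * NormedSpace.exp (t' • (-B)) := by
      rw [key m' t']
      simp only [mul_assoc]
      rw [← hc2]
    have hconj : H * Ot m' t' - Ot m' t' * H
        = NormedSpace.exp (t' • B) * (H * O m' - O m' * H) * NormedSpace.exp (t' • (-B)) := by
      rw [hl, hr]
      noncomm_ring
    rw [hconj, hinv m']
    simp only [key, Finset.mul_sum, Finset.sum_mul, mul_neg, neg_mul,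
      Matrix.mul_smul, Matrix.smul_mul, mul_assoc, neg_inj]
  have hBF : B * Ot m' t' - Ot m' t' * B
      = Complex.I • (H * Ot m' t' - Ot m' t' * H) := by
    rw [hB, smul_sub, Matrix.smul_mul, Matrix.mul_smul]
  have hwk : ∀ k, L (Ot k t') = w m k t t' := fun k => ((hw m k t t').trans (hLapp _).symm).symm
  have hval : L (B * Ot m' t' - Ot m' t' * B)
      = -Complex.I * ∑ k, h m' k * w m k t t' := by
    rw [hBF, hHF, _root_.map_smul, map_neg, map_sum]
    simp only [_root_.map_smul, smul_eq_mul, hwk]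
    rw [mul_neg, neg_mul]
  rwa [hval] at hdw

end
end

section
/- Let H₁ and H₂ be Hermitian N×N complex matrices, let O^{(1)}_1,…,O^{(1)}_{M₁} be N×N complex matrices satisfying [H₁, O^{(1)}_m] = -∑_{k=1}^{M₁} h^{(1)}_{mk} O^{(1)}_k for all m, and let O^{(2)}_1,…,O^{(2)}_{M₂} be N×N complex matrices satisfying [H₂, O^{(2)}_{m'}] = -∑_{k=1}^{M₂} h^{(2)}_{m'k} O^{(2)}_k for all m'. Let ρ be any N×N complex matrix and define w_{m,m'}(t₁,t₂) := trace(ρ · exp(it₁H₁) O^{(1)}_m exp(-it₁H₁) · exp(it₂H₂) O^{(2)}_{m'} exp(-it₂H₂)). Then for every fixed t₂ and every (m,m'), the function t₁ ↦ w_{m,m'}(t₁,t₂) is differentiable with derivative ∂_{t₁} w_{m,m'}(t₁,t₂) = -i ∑_{k=1}^{M₁} h^{(1)}_{mk} w_{k,m'}(t₁,t₂). (Generalization of Theorem 3.1 to operators evolving under distinct Hamiltonians.) -/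
open Matrix NormedSpace

attribute [local instance] Matrix.linftyOpNormedRing Matrix.linftyOpNormedAlgebra

lemma aux_exp_deriv {N : ℕ} (H : Matrix (Fin N) (Fin N) ℂ) (c : ℂ) (t : ℝ) :
    HasDerivAt (fun s : ℝ => exp ((c * s) • H))
      (c • (H * exp ((c * t) • H))) t := by
  have h1 : HasDerivAt (fun u : ℂ => exp (u • (c • H)))
      ((c • H) * exp ((t : ℂ) • (c • H))) (t : ℂ) := hasDerivAt_exp_smul_const' _ _
  have h2 := HasDerivAt.scomp (𝕜 := ℝ) (𝕜' := ℂ) t h1 (Complex.ofRealCLM.hasDerivAt (x := t))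
  simp only [Function.comp_def, Complex.ofRealCLM_apply, smul_smul, mul_comm _ c] at h2 ⊢
  refine h2.congr_deriv (Eq.symm ?_)
  simp [smul_smul, smul_mul_assoc, mul_comm]

/-- Generalization of Theorem 3.1 to products of operators evolving under distinct
Hamiltonians: `∂_{t₁} w m m' t₁ t₂ = -i ∑ k, h₁ m k * w k m' t₁ t₂`. -/
theorem two_time_correlator_distinct_hamiltonians
    {N M₁ M₂ : ℕ} (hN : 0 < N) (hM₁ : 0 < M₁) (hM₂ : 0 < M₂)
    (H₁ H₂ : Matrix (Fin N) (Fin N) ℂ) (hH₁ : H₁.IsHermitian) (hH₂ : H₂.IsHermitian)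
    (O₁ : Fin M₁ → Matrix (Fin N) (Fin N) ℂ)
    (O₂ : Fin M₂ → Matrix (Fin N) (Fin N) ℂ)
    (h₁ : Fin M₁ → Fin M₁ → ℂ) (h₂ : Fin M₂ → Fin M₂ → ℂ)
    (hinv₁ : ∀ m, H₁ * O₁ m - O₁ m * H₁ = -∑ k, h₁ m k • O₁ k)
    (hinv₂ : ∀ m', H₂ * O₂ m' - O₂ m' * H₂ = -∑ k, h₂ m' k • O₂ k)
    (ρ : Matrix (Fin N) (Fin N) ℂ)
    (w : Fin M₁ → Fin M₂ → ℝ → ℝ → ℂ)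
    (hw : ∀ m m' t₁ t₂, w m m' t₁ t₂ =
      (ρ * (exp ((Complex.I * t₁) • H₁) * O₁ m * exp ((-(Complex.I * t₁)) • H₁))
         * (exp ((Complex.I * t₂) • H₂) * O₂ m' * exp ((-(Complex.I * t₂)) • H₂))).trace) :
    ∀ (t₁ t₂ : ℝ) (m : Fin M₁) (m' : Fin M₂),
      HasDerivAt (fun s : ℝ => w m m' s t₂)
        (-Complex.I * ∑ k, h₁ m k * w k m' t₁ t₂) t₁ := by
  intro t₁ t₂ m m'
  set C := exp ((Complex.I * t₂) • H₂) * O₂ m' * exp ((-(Complex.I * t₂)) • H₂) with hC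
  set Ep := exp ((Complex.I * t₁) • H₁) with hEp
  set Em := exp ((-(Complex.I * t₁)) • H₁) with hEm
  -- derivative of the two exponentials
  have hA : HasDerivAt (fun s : ℝ => exp ((Complex.I * s) • H₁))
      (Complex.I • (H₁ * Ep)) t₁ := aux_exp_deriv H₁ Complex.I t₁
  have hB : HasDerivAt (fun s : ℝ => exp ((-(Complex.I * s)) • H₁))
      ((-Complex.I) • (H₁ * Em)) t₁ := by
    have := aux_exp_deriv H₁ (-Complex.I) t₁
    simp only [neg_mul] at this ⊢
    simpa [hEm, neg_mul] using this
  have hF : HasDerivAt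
      (fun s : ℝ => ρ * (exp ((Complex.I * s) • H₁) * O₁ m * exp ((-(Complex.I * s)) • H₁)) * C)
      (ρ * ((Complex.I • (H₁ * Ep)) * O₁ m * Em + Ep * O₁ m * ((-Complex.I) • (H₁ * Em))) * C) t₁ := by
    have h1 := ((hA.mul_const (O₁ m)).mul hB).const_mul ρ
    have h2 := h1.mul_const C
    exact h2
  -- apply trace
  have htr := (((Matrix.traceLinearMap (Fin N) ℂ ℂ).toContinuousLinearMap.restrictScalars ℝ)).hasFDerivAt.comp_hasDerivAt t₁ hF
  simp only [ContinuousLinearMap.coe_restrictScalars', LinearMap.coe_toContinuousLinearMap', Matrix.traceLinearMap_apply, Function.comp_def] at htr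
  -- identify the function with w
  have hfun : (fun s : ℝ => w m m' s t₂) =
      (fun s : ℝ => (ρ * (exp ((Complex.I * s) • H₁) * O₁ m * exp ((-(Complex.I * s)) • H₁)) * C).trace) := by
    funext s; rw [hw]
  rw [hfun]
  refine htr.congr_deriv (Eq.symm ?_)
  -- now the derivative value identity
  have hc : Ep * H₁ = H₁ * Ep := (((Commute.refl H₁).smul_left ((Complex.I * t₁ : ℂ))).exp_left).eq
  have hO : H₁ * O₁ m = O₁ m * H₁ - ∑ k, h₁ m k • O₁ k := by
    have := hinv₁ m; rw [sub_eq_iff_eq_add] at this; rw [this]; abel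
  have hX : H₁ * Ep * O₁ m * Em - Ep * O₁ m * (H₁ * Em)
      = -∑ k, h₁ m k • (Ep * O₁ k * Em) := by
    rw [← hc, mul_assoc Ep H₁ (O₁ m), hO]
    simp only [mul_sub, sub_mul, Finset.sum_mul, Finset.mul_sum,
      Matrix.smul_mul, Matrix.mul_smul, mul_assoc]
    abel
  have key : (Complex.I • (H₁ * Ep)) * O₁ m * Em + Ep * O₁ m * ((-Complex.I) • (H₁ * Em))
      = (-Complex.I) • ∑ k, h₁ m k • (Ep * O₁ k * Em) := by
    rw [smul_mul_assoc, smul_mul_assoc, neg_smul, neg_smul, mul_neg, mul_smul_comm,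
      ← sub_eq_add_neg, ← smul_sub, hX, smul_neg]
  rw [key]
  change _ = Matrix.trace ((ρ * ((-Complex.I) • ∑ k, h₁ m k • (Ep * O₁ k * Em))) * C)
  simp only [Matrix.mul_smul, Matrix.smul_mul, Matrix.mul_sum, Matrix.sum_mul,
    Matrix.trace_smul, Matrix.trace_sum, smul_eq_mul, Finset.mul_sum]
  refine Finset.sum_congr rfl fun k _ => ?_
  rw [hw, hC, hEp, hEm]
end

section
/- Let H be a Hermitian N×N complex matrix and O_1,…,O_M be N×N complex matrices satisfying the invariance property [H,O_m] = -∑_{m'=1}^M h_{mm'} O_{m'} for all m, with H_S the M×M matrix of entries h_{mm'}. Then the Heisenberg evolution of each operator is a linear combination of the operators in the set whose coefficients are given by the matrix exponential of -it H_S: for all t ∈ ℝ and all m, exp(itH) O_m exp(-itH) = ∑_{m'=1}^M (exp(-it H_S))_{mm'} O_{m'}. -/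
open Matrix NormedSpace

set_option maxHeartbeats 1000000

section Helpers

variable {𝔸 : Type*} [NormedRing 𝔸] [NormedAlgebra ℂ 𝔸] [CompleteSpace 𝔸]

/-- Left multiplication as a ring homomorphism into continuous linear maps. -/
noncomputable def mulLeftRingHom' : 𝔸 →+* (𝔸 →L[ℂ] 𝔸) where
  toFun a := ContinuousLinearMap.mul ℂ 𝔸 a
  map_one' := by ext x; simp
  map_mul' a b := by ext x; simp [mul_assoc]
  map_zero' := by ext x; simp
  map_add' a b := by ext x; simp [add_mul]

/-- Right multiplication as a ring homomorphism from the opposite ring. -/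
noncomputable def mulRightRingHom' : 𝔸ᵐᵒᵖ →+* (𝔸 →L[ℂ] 𝔸) where
  toFun a := (ContinuousLinearMap.mul ℂ 𝔸).flip a.unop
  map_one' := by ext x; simp
  map_mul' a b := by ext x; simp [mul_assoc]
  map_zero' := by ext x; simp
  map_add' a b := by ext x; simp [mul_add]

lemma exp_conj_eq_exp_ad (B X : 𝔸) :
    exp B * X * exp (-B) =
      exp (ContinuousLinearMap.mul ℂ 𝔸 B - (ContinuousLinearMap.mul ℂ 𝔸).flip B) X := by
  letI : NormedAlgebra ℚ 𝔸 := .restrictScalars ℚ ℂ 𝔸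
  letI : NormedAlgebra ℚ 𝔸ᵐᵒᵖ := .restrictScalars ℚ ℂ 𝔸ᵐᵒᵖ
  letI : NormedAlgebra ℚ (𝔸 →L[ℂ] 𝔸) := .restrictScalars ℚ ℂ (𝔸 →L[ℂ] 𝔸)
  have hc : Commute (ContinuousLinearMap.mul ℂ 𝔸 B)
      (-((ContinuousLinearMap.mul ℂ 𝔸).flip B)) := by
    apply Commute.neg_right
    apply ContinuousLinearMap.ext
    intro x
    simp [mul_assoc]
  have h1 : exp (ContinuousLinearMap.mul ℂ 𝔸 B) = ContinuousLinearMap.mul ℂ 𝔸 (exp B) := by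
    have := map_exp (mulLeftRingHom' (𝔸 := 𝔸)) (ContinuousLinearMap.mul ℂ 𝔸).continuous B
    simpa [mulLeftRingHom'] using this.symm
  have h2 : exp (-((ContinuousLinearMap.mul ℂ 𝔸).flip B)) =
      (ContinuousLinearMap.mul ℂ 𝔸).flip (exp (-B)) := by
    have hcont : Continuous (mulRightRingHom' (𝔸 := 𝔸)) :=
      (ContinuousLinearMap.mul ℂ 𝔸).flip.continuous.comp MulOpposite.continuous_unop
    have := map_exp (mulRightRingHom' (𝔸 := 𝔸)) hcont (MulOpposite.op (-B))
    rw [exp_op] at this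
    simpa [mulRightRingHom'] using this.symm
  have hsub : ContinuousLinearMap.mul ℂ 𝔸 B - (ContinuousLinearMap.mul ℂ 𝔸).flip B =
      ContinuousLinearMap.mul ℂ 𝔸 B + -((ContinuousLinearMap.mul ℂ 𝔸).flip B) :=
    sub_eq_add_neg _ _
  rw [hsub, exp_add_of_commute hc, h1, h2]
  simp [mul_assoc]

variable {E : Type*} [NormedAddCommGroup E] [NormedSpace ℂ E] [CompleteSpace E]

lemma exp_intertwine (T : 𝔸 →L[ℂ] 𝔸) (S : E →L[ℂ] E) (ψ : E →L[ℂ] 𝔸)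
    (hTS : ∀ c, T (ψ c) = ψ (S c)) (c : E) :
    exp T (ψ c) = ψ (exp S c) := by
  have hpow : ∀ (n : ℕ) (c : E), (T ^ n) (ψ c) = ψ ((S ^ n) c) := by
    intro n
    induction n with
    | zero => intro c; simp
    | succ n ih =>
      intro c
      rw [pow_succ, ContinuousLinearMap.mul_apply, hTS, ih, pow_succ,
        ContinuousLinearMap.mul_apply]
  have hT := (exp_series_hasSum_exp' (𝕂 := ℂ) T).mapL (ContinuousLinearMap.apply ℂ 𝔸 (ψ c))
  have hS2 := ((exp_series_hasSum_exp' (𝕂 := ℂ) S).mapL (ContinuousLinearMap.apply ℂ E c)).mapL ψ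
  simp only [ContinuousLinearMap.apply_apply] at hT hS2
  refine hT.unique (hS2.congr_fun ?_)
  intro n
  simp only [ContinuousLinearMap.smul_apply, _root_.map_smul, hpow]

end Helpers

/-- The Heisenberg evolution of each operator in the set is the linear combination
with coefficients given by the matrix exponential of the shadow Hamiltonian:
`exp(itH) O_m exp(-itH) = ∑ m', (exp (-it H_S)) m m' • O m'`. -/
theorem heisenberg_evolution_shadow
    {N M : ℕ} (hN : 0 < N) (hM : 0 < M)
    (H : Matrix (Fin N) (Fin N) ℂ) (hH : H.IsHermitian)
    (O : Fin M → Matrix (Fin N) (Fin N) ℂ)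
    (h : Fin M → Fin M → ℂ)
    (hinv : ∀ m, H * O m - O m * H = -∑ m', h m m' • O m')
    (HS : Matrix (Fin M) (Fin M) ℂ) (hHS : ∀ m m', HS m m' = h m m') :
    ∀ (t : ℝ) (m : Fin M),
      exp ((Complex.I * t) • H) * O m * exp ((-(Complex.I * t)) • H) =
        ∑ m', (exp ((-(Complex.I * t)) • HS)) m m' • O m' := by
  intro t m
  rw [neg_smul, neg_smul]
  letI : SeminormedRing (Matrix (Fin N) (Fin N) ℂ) := Matrix.linftyOpSemiNormedRing
  letI : NormedRing (Matrix (Fin N) (Fin N) ℂ) := Matrix.linftyOpNormedRing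
  letI : NormedAlgebra ℂ (Matrix (Fin N) (Fin N) ℂ) := Matrix.linftyOpNormedAlgebra
  letI : SeminormedRing (Matrix (Fin M) (Fin M) ℂ) := Matrix.linftyOpSemiNormedRing
  letI : NormedRing (Matrix (Fin M) (Fin M) ℂ) := Matrix.linftyOpNormedRing
  letI : NormedAlgebra ℂ (Matrix (Fin M) (Fin M) ℂ) := Matrix.linftyOpNormedAlgebra
  set B : Matrix (Fin N) (Fin N) ℂ := (Complex.I * t) • H with hB
  set A : Matrix (Fin M) (Fin M) ℂ := -((Complex.I * t) • HS) with hA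
  -- ψ : coefficient vector to operator
  let ψL : (Fin M → ℂ) →ₗ[ℂ] Matrix (Fin N) (Fin N) ℂ :=
    { toFun := fun c => ∑ m', c m' • O m'
      map_add' := by
        intro a b
        simp [add_smul, Finset.sum_add_distrib]
      map_smul' := by
        intro r a
        simp [smul_smul, Finset.smul_sum] }
  let ψ : (Fin M → ℂ) →L[ℂ] Matrix (Fin N) (Fin N) ℂ := LinearMap.toContinuousLinearMap ψL
  let S : (Fin M → ℂ) →L[ℂ] (Fin M → ℂ) := LinearMap.toContinuousLinearMap (Aᵀ.mulVecLin)
  have hψ : ∀ c, ψ c = ∑ m', c m' • O m' := fun c => rfl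
  have hS : ∀ c, S c = Aᵀ.mulVec c := fun c => rfl
  have hTS : ∀ c, (ContinuousLinearMap.mul ℂ (Matrix (Fin N) (Fin N) ℂ) B
      - (ContinuousLinearMap.mul ℂ (Matrix (Fin N) (Fin N) ℂ)).flip B) (ψ c) = ψ (S c) := by
    intro c
    simp only [ContinuousLinearMap.sub_apply, ContinuousLinearMap.mul_apply',
      ContinuousLinearMap.flip_apply]
    rw [hψ, hψ, hS]
    have key : B * (∑ m', c m' • O m') - (∑ m', c m' • O m') * B
        = ∑ mm, c mm • ((Complex.I * t) • (H * O mm - O mm * H)) := by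
      rw [hB, Finset.mul_sum, Finset.sum_mul, ← Finset.sum_sub_distrib]
      congr 1
      funext mm
      simp only [Matrix.smul_mul, Matrix.mul_smul, smul_sub, smul_comm (c mm)]
    rw [key]
    have key2 : ∀ mm : Fin M, c mm • ((Complex.I * t) • (H * O mm - O mm * H))
        = ∑ m', (c mm * (-(Complex.I * t) * HS mm m')) • O m' := by
      intro mm
      rw [hinv mm, ← Finset.sum_neg_distrib, Finset.smul_sum, Finset.smul_sum]
      congr 1
      funext m'
      rw [hHS]
      match_scalars
      ring
    rw [Finset.sum_congr rfl (fun mm _ => key2 mm), Finset.sum_comm]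
    congr 1
    funext m'
    rw [← Finset.sum_smul]
    congr 1
    simp only [hA, Matrix.mulVec, Matrix.transpose_apply, dotProduct, Matrix.neg_apply,
      Matrix.smul_apply, smul_eq_mul]
    apply Finset.sum_congr rfl
    intro mm _
    ring
  have step1 : exp B * O m * exp (-B)
      = exp (ContinuousLinearMap.mul ℂ (Matrix (Fin N) (Fin N) ℂ) B
          - (ContinuousLinearMap.mul ℂ (Matrix (Fin N) (Fin N) ℂ)).flip B) (O m) :=
    exp_conj_eq_exp_ad B (O m)
  have hOm : O m = ψ (Pi.single m 1) := by
    rw [hψ]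
    rw [Finset.sum_eq_single m]
    · simp
    · intro b _ hb
      simp [Pi.single_apply, hb]
    · intro hm
      exact absurd (Finset.mem_univ m) hm
  have step2 : exp (ContinuousLinearMap.mul ℂ (Matrix (Fin N) (Fin N) ℂ) B
      - (ContinuousLinearMap.mul ℂ (Matrix (Fin N) (Fin N) ℂ)).flip B) (ψ (Pi.single m 1))
      = ψ (exp S (Pi.single m 1)) :=
    exp_intertwine _ S ψ hTS (Pi.single m 1)
  -- identify exp S with matrix exponential
  let Φ : Matrix (Fin M) (Fin M) ℂ →+* ((Fin M → ℂ) →L[ℂ] (Fin M → ℂ)) :=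
    { toFun := fun P => LinearMap.toContinuousLinearMap P.mulVecLin
      map_one' := by
        apply ContinuousLinearMap.ext
        intro x
        simp only [LinearMap.coe_toContinuousLinearMap', Matrix.mulVecLin_one,
          LinearMap.id_apply, ContinuousLinearMap.one_apply]
      map_mul' := fun P Q => by
        apply ContinuousLinearMap.ext
        intro x
        simp only [LinearMap.coe_toContinuousLinearMap', Matrix.mulVecLin_mul,
          LinearMap.comp_apply, ContinuousLinearMap.mul_apply]
      map_zero' := by
        apply ContinuousLinearMap.ext
        intro x
        simp only [LinearMap.coe_toContinuousLinearMap', Matrix.mulVecLin_zero,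
          LinearMap.zero_apply, ContinuousLinearMap.zero_apply]
      map_add' := fun P Q => by
        apply ContinuousLinearMap.ext
        intro x
        simp only [LinearMap.coe_toContinuousLinearMap', Matrix.mulVecLin_add,
          LinearMap.add_apply, ContinuousLinearMap.add_apply] }
  have hΦcont : Continuous Φ := by
    have : IsLinearMap ℂ (Φ : Matrix (Fin M) (Fin M) ℂ → ((Fin M → ℂ) →L[ℂ] (Fin M → ℂ))) := by
      constructor
      · exact Φ.map_add
      · intro r P
        apply ContinuousLinearMap.ext
        intro x
        show ((r • P).mulVecLin) x = r • (P.mulVecLin x)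
        simp only [Matrix.mulVecLin_apply, Matrix.smul_mulVec]
    exact (this.mk' _).continuous_of_finiteDimensional
  have step3 : exp S = Φ (exp Aᵀ) := by
    letI : NormedAlgebra ℚ (Matrix (Fin M) (Fin M) ℂ) := .restrictScalars ℚ ℂ _
    letI : NormedAlgebra ℚ ((Fin M → ℂ) →L[ℂ] (Fin M → ℂ)) := .restrictScalars ℚ ℂ _
    have := map_exp Φ hΦcont Aᵀ
    refine Eq.trans ?_ this.symm
    rfl
  have step4 : exp Aᵀ = (exp A)ᵀ := Matrix.exp_transpose A
  have final : exp B * O m * exp (-B) = ∑ m', (exp A) m m' • O m' := by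
    rw [step1, hOm, step2, step3, step4]
    rw [hψ]
    apply Finset.sum_congr rfl
    intro m' _
    congr 1
    show ((exp A)ᵀ).mulVec (Pi.single m 1) m' = exp A m m'
    simp [Matrix.mulVec_single]
  exact final
end
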